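/- Let r ∈ [1 - 1/√3, 1/2], ℓ := 2 arctan(√(4(1-r)² - 1)), and for h ∈ [0, ℓ] define a(h) := 2 arcsin((1-r) sin h) and b(h) := h + (ℓ - a(h))/2. Then b(h) ≥ a(h) for all h ∈ [0, ℓ], with equality only at h = ℓ. -/

import Mathlib

open Real

set_option maxHeartbeats 2000000 in
theorem b_ge_a
    (r ℓ : ℝ) (hr : r ∈ Set.Icc (1 - 1 / Real.sqrt 3) (1 / 2))
    (hℓ : ℓ = 2 * Real.arctan (Real.sqrt (4 * (1 - r) ^ 2 - 1)))
    (a b : ℝ → ℝ)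
    (ha : ∀ h, a h = 2 * Real.arcsin ((1 - r) * Real.sin h))
    (hb : ∀ h, b h = h + (ℓ - a h) / 2) :
    ∀ h ∈ Set.Icc 0 ℓ, a h ≤ b h ∧ (b h = a h → h = ℓ) := by
  obtain ⟨hr1, hr2⟩ := hr
  set c : ℝ := 1 - r with hcdef
  have hc1 : (1:ℝ)/2 ≤ c := by simp only [hcdef]; linarith
  have hs3 : Real.sqrt 3 ^ 2 = 3 := Real.sq_sqrt (by norm_num)
  have hs3pos : (0:ℝ) < Real.sqrt 3 := by positivity
  have hc2 : c ≤ 1 / Real.sqrt 3 := by simp only [hcdef]; linarith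
  have hc0 : (0:ℝ) < c := by linarith
  have hcsq : c ^ 2 ≤ 1/3 := by
    have h1 : (1 / Real.sqrt 3) ^ 2 = 1/3 := by
      rw [div_pow, hs3]; norm_num
    nlinarith
  -- t
  set t : ℝ := Real.sqrt (4 * c ^ 2 - 1) with htdef
  have ht4 : (0:ℝ) ≤ 4 * c ^ 2 - 1 := by nlinarith
  have ht0 : 0 ≤ t := Real.sqrt_nonneg _
  have ht2 : t ^ 2 = 4 * c ^ 2 - 1 := Real.sq_sqrt ht4
  have h1t : 1 + t ^ 2 = 4 * c ^ 2 := by linarith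
  have hst : Real.sqrt (1 + t ^ 2) = 2 * c := by
    rw [show 1 + t ^ 2 = (2*c)^2 by nlinarith]
    exact Real.sqrt_sq (by linarith)
  clear_value c
  -- θ
  set θ : ℝ := Real.arctan t with hθdef
  have hℓθ : ℓ = 2 * θ := hℓ
  have hθ0 : 0 ≤ θ := by
    rw [hθdef, ← Real.arctan_zero]
    exact Real.arctan_strictMono.monotone ht0
  have ht1 : t ≤ 1 := by nlinarith
  have hθ4 : θ ≤ π / 4 := by
    rw [← Real.arctan_one]; exact Real.arctan_strictMono.monotone ht1
  have hℓ0 : 0 ≤ ℓ := by rw [hℓθ]; linarith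
  have hℓπ : ℓ ≤ π / 2 := by rw [hℓθ]; linarith
  have hsinθ : Real.sin θ = t / (2 * c) := by
    rw [hθdef, Real.sin_arctan, hst]
  have hcosθ : Real.cos θ = 1 / (2 * c) := by
    rw [hθdef, Real.cos_arctan, hst]
  clear_value t θ
  have hsinℓ : Real.sin ℓ = t / (2 * c ^ 2) := by
    rw [hℓθ, Real.sin_two_mul, hsinθ, hcosθ]
    field_simp
  have haℓ : a ℓ = ℓ := by
    rw [ha, hsinℓ, show c * (t / (2 * c ^ 2)) = t / (2 * c) by field_simp,
      ← hsinθ, Real.arcsin_sin (by linarith [Real.pi_pos] : -(π/2) ≤ θ)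
        (by linarith [Real.pi_pos] : θ ≤ π/2), hℓθ]
  -- basic bound on c * sin h
  have hbound : ∀ h : ℝ, (c * Real.sin h) ^ 2 ≤ 1/3 := by
    intro h
    have h2 : Real.sin h ^ 2 ≤ 1 := Real.sin_sq_le_one h
    have h3 : (c * Real.sin h) ^ 2 = c ^ 2 * Real.sin h ^ 2 := by ring
    nlinarith [sq_nonneg (Real.sin h), sq_nonneg c]
  have hDpos : ∀ h : ℝ, 0 < Real.sqrt (1 - (c * Real.sin h) ^ 2) := by
    intro h
    apply Real.sqrt_pos.mpr
    have h1 := hbound h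
    linarith
  -- derivative of a
  have hda : ∀ h : ℝ, HasDerivAt a
      (2 * (c * Real.cos h / Real.sqrt (1 - (c * Real.sin h) ^ 2))) h := by
    intro h
    have hne1 : c * Real.sin h ≠ -1 := by
      intro hh; have := hbound h; rw [hh] at this; norm_num at this
    have hne2 : c * Real.sin h ≠ 1 := by
      intro hh; have := hbound h; rw [hh] at this; norm_num at this
    have hs : HasDerivAt (fun x => c * Real.sin x) (c * Real.cos h) h :=
      (Real.hasDerivAt_sin h).const_mul c
    have hcomp := (Real.hasDerivAt_arcsin hne1 hne2).comp h hs
    have : HasDerivAt (fun x => 2 * Real.arcsin (c * Real.sin x))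
        (2 * (1 / Real.sqrt (1 - (c * Real.sin h) ^ 2) * (c * Real.cos h))) h :=
      hcomp.const_mul 2
    have heq : a = fun x => 2 * Real.arcsin (c * Real.sin x) := by
      funext x; exact ha x
    rw [heq]
    convert this using 1
    field_simp
  -- F
  set F : ℝ → ℝ := fun h => (2 * h + ℓ) / 3 - a h with hFdef
  clear_value F
  have hdF : ∀ h : ℝ, HasDerivAt F
      (2/3 - 2 * (c * Real.cos h / Real.sqrt (1 - (c * Real.sin h) ^ 2))) h := by
    intro h
    have h1 : HasDerivAt (fun x : ℝ => (2 * x + ℓ) / 3) (2/3) h := by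
      have h2 : HasDerivAt (fun x : ℝ => 2 * x + ℓ) 2 h := by
        simpa using ((hasDerivAt_id h).const_mul 2).add_const ℓ
      simpa using h2.div_const 3
    rw [hFdef]
    exact h1.sub (hda h)
  have hFc : Continuous F := by
    have : Differentiable ℝ F := fun x => (hdF x).differentiableAt
    exact this.continuous
  have hFanti : StrictAntiOn F (Set.Icc 0 ℓ) := by
    apply strictAntiOn_of_deriv_neg (convex_Icc 0 ℓ) hFc.continuousOn
    intro x hx
    rw [interior_Icc] at hx
    obtain ⟨hx0, hxℓ⟩ := hx
    rw [(hdF x).deriv]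
    -- show 2/3 < 2 * (c * cos x / sqrt (1 - (c sin x)^2))
    have hxπ : x < π / 2 := lt_of_lt_of_le hxℓ hℓπ
    have hcosx : 0 < Real.cos x :=
      Real.cos_pos_of_mem_Ioo ⟨by linarith [Real.pi_pos], hxπ⟩
    have hsx0 : 0 < Real.sin x := Real.sin_pos_of_pos_of_lt_pi hx0
      (by linarith [Real.pi_pos])
    have hsinlt : Real.sin x < Real.sin ℓ := by
      apply Real.strictMonoOn_sin ⟨by linarith [Real.pi_pos], le_of_lt hxπ⟩
        ⟨by linarith [Real.pi_pos], hℓπ⟩ hxℓ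
    set s := Real.sin x with hsdef
    clear_value s
    have hcos2 : Real.cos x ^ 2 = 1 - s ^ 2 := by
      have h1 := Real.sin_sq_add_cos_sq x
      rw [← hsdef] at h1; linarith
    have hssq : s ^ 2 < (4 * c ^ 2 - 1) / (4 * c ^ 4) := by
      have h1 : s < t / (2 * c ^ 2) := by rw [← hsinℓ]; exact hsinlt
      have h2 : s ^ 2 < (t / (2 * c ^ 2)) ^ 2 := by nlinarith
      calc s ^ 2 < (t / (2 * c ^ 2)) ^ 2 := h2
        _ = t ^ 2 / (4 * c ^ 4) := by rw [div_pow]; ring_nf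
        _ = (4 * c ^ 2 - 1) / (4 * c ^ 4) := by rw [ht2]
    -- key algebraic inequality: 8 c^2 s^2 < 9 c^2 - 1
    have hkey : 8 * c ^ 2 * s ^ 2 < 9 * c ^ 2 - 1 := by
      have h3 : 8 * c ^ 2 * ((4 * c ^ 2 - 1) / (4 * c ^ 4)) ≤ 9 * c ^ 2 - 1 := by
        have hA : (0:ℝ) ≤ 1 - 3 * c ^ 2 := by nlinarith
        have hB : (0:ℝ) ≤ 2 - 3 * c ^ 2 := by nlinarith
        rw [mul_comm, div_mul_eq_mul_div, div_le_iff₀ (by positivity : (0:ℝ) < 4 * c ^ 4)]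
        nlinarith [mul_nonneg (mul_nonneg hA hB) (sq_nonneg c)]
      nlinarith
    -- hence sqrt(1 - (c s)^2) < 3 c cos x
    have hD2 : 1 - (c * s) ^ 2 < (3 * c * Real.cos x) ^ 2 := by
      have : (3 * c * Real.cos x) ^ 2 = 9 * c ^ 2 * (1 - s ^ 2) := by
        rw [mul_pow, mul_pow, hcos2]; ring
      rw [this]; nlinarith
    have hDlt : Real.sqrt (1 - (c * s) ^ 2) < 3 * c * Real.cos x := by
      rw [Real.sqrt_lt' (by positivity)]
      exact hD2
    have hD : 0 < Real.sqrt (1 - (c * s) ^ 2) := by rw [hsdef]; exact hDpos x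
    have h5 : 2/3 * Real.sqrt (1 - (c * s) ^ 2) < 2 * (c * Real.cos x) := by
      nlinarith
    have h6 : 2/3 < 2 * (c * Real.cos x / Real.sqrt (1 - (c * s) ^ 2)) := by
      rw [mul_div_assoc' , lt_div_iff₀ hD]
      linarith
    linarith
  have hFℓ : F ℓ = 0 := by
    simp only [hFdef, haℓ]; ring
  intro h ⟨hh0, hhℓ⟩
  rcases eq_or_lt_of_le hhℓ with heq | hlt
  · subst heq
    rw [hb, haℓ]
    constructor
    · linarith
    · intro _; rfl
  · have hFh : 0 < F h := by
      have := hFanti ⟨hh0, hhℓ⟩ ⟨hℓ0, le_refl ℓ⟩ hlt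
      rw [hFℓ] at this; exact this
    have hba : b h - a h = 3/2 * F h := by
      rw [hb, hFdef]; ring
    constructor
    · linarith
    · intro hbe; exfalso; rw [hbe] at hba; nlinarith
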